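/- Let (x,ξ):ℝ→ℝ³×ℝ³ be any solution of the Heisenberg bicharacteristic system with g*(x(t),ξ(t))=1/4 for all t and with constant momentum ξ₃≠0. Then for every t∈ℝ one has the drift estimate |x₃(t)−x₃(0)−t/(4ξ₃)| ≤ 1/(8ξ₃²)+|ξ₂|/ξ₃². In particular, x₃ drifts at average speed 1/(4ξ₃) up to a uniformly bounded oscillation. -/
import Mathlib


/-- The Heisenberg bicharacteristic system: the Hamiltonian system on ℝ³×ℝ³ associated with
`g*(x,ξ) = ξ₁² + (ξ₂ - x₁ξ₃)²`, on a set `I` of times. -/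
def HeisenbergBichar (x₁ x₂ x₃ ξ₁ ξ₂ ξ₃ : ℝ → ℝ) (I : Set ℝ) : Prop :=
  ∀ t ∈ I,
    HasDerivAt x₁ (2 * ξ₁ t) t ∧
    HasDerivAt x₂ (2 * (ξ₂ t - x₁ t * ξ₃ t)) t ∧
    HasDerivAt x₃ (-2 * x₁ t * (ξ₂ t - x₁ t * ξ₃ t)) t ∧
    HasDerivAt ξ₁ (2 * ξ₃ t * (ξ₂ t - x₁ t * ξ₃ t)) t ∧
    HasDerivAt ξ₂ 0 t ∧
    HasDerivAt ξ₃ 0 t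

private lemma heis_prod_bd {a e : ℝ} (h : a ^ 2 + e ^ 2 = 1/4) :
    |a * e| ≤ 1/8 ∧ |a| ≤ 1/2 := by
  constructor
  · rw [abs_le]
    constructor <;> nlinarith [sq_nonneg (a - e), sq_nonneg (a + e)]
  · rw [abs_le]
    constructor <;> nlinarith [sq_nonneg e]

private lemma heis_M_bd {u v s r b : ℝ} (hu : |u| ≤ 1/8) (hv : |v| ≤ 1/8)
    (hs : |s| ≤ 1/2) (hr : |r| ≤ 1/2) :
    |(u - v)/2 - b*(s - r)| ≤ 1/8 + |b| := by
  rw [abs_le] at *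
  have h1 : -|b| ≤ b := neg_abs_le b
  have h2 : b ≤ |b| := le_abs_self b
  constructor <;> nlinarith [hu.1, hu.2, hv.1, hv.2, hs.1, hs.2, hr.1, hr.2]

/-- Any global solution of the Heisenberg bicharacteristic system with `g* ≡ 1/4` and constant
momentum ξ₃ = c ≠ 0 satisfies the drift estimate
`|x₃(t) - x₃(0) - t/(4c)| ≤ 1/(8c²) + |ξ₂|/c²`. -/
theorem stmt_4 (x₁ x₂ x₃ ξ₁ ξ₂ ξ₃ : ℝ → ℝ)
    (hsol : HeisenbergBichar x₁ x₂ x₃ ξ₁ ξ₂ ξ₃ Set.univ)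
    (hg : ∀ t : ℝ, (ξ₁ t) ^ 2 + (ξ₂ t - x₁ t * ξ₃ t) ^ 2 = 1 / 4)
    (c : ℝ) (hc : c ≠ 0) (hξ₃ : ∀ t, ξ₃ t = c) :
    ∀ t : ℝ, |x₃ t - x₃ 0 - t / (4 * c)| ≤ 1 / (8 * c ^ 2) + |ξ₂ 0| / c ^ 2 := by
  have hc2 : (0:ℝ) < c ^ 2 := by positivity
  have hξ₂ : ∀ t, ξ₂ t = ξ₂ 0 := fun t =>
    is_const_of_deriv_eq_zero (fun s => ((hsol s trivial).2.2.2.2.1).differentiableAt)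
      (fun s => ((hsol s trivial).2.2.2.2.1).deriv) t 0
  set b := ξ₂ 0 with hb
  set F : ℝ → ℝ := fun t => x₃ t - t / (4 * c)
      - ξ₁ t * (b - x₁ t * c) / (2 * c ^ 2) + b * ξ₁ t / c ^ 2 with hF
  have hFd : ∀ t, HasDerivAt F 0 t := by
    intro t
    obtain ⟨h1, h2, h3, h4, h5, h6⟩ := hsol t trivial
    have hη : HasDerivAt (fun s => b - x₁ s * c) (0 - 2 * ξ₁ t * c) t :=
      (hasDerivAt_const t b).sub (h1.mul_const c)
    have hD : HasDerivAt F (-2 * x₁ t * (ξ₂ t - x₁ t * ξ₃ t) - 1/(4*c)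
        - (2 * ξ₃ t * (ξ₂ t - x₁ t * ξ₃ t) * (b - x₁ t * c) + ξ₁ t * (0 - 2 * ξ₁ t * c))
          / (2 * c ^ 2)
        + b * (2 * ξ₃ t * (ξ₂ t - x₁ t * ξ₃ t)) / c ^ 2) t := by
      have hid : HasDerivAt (fun s : ℝ => s / (4*c)) (1/(4*c)) t := by
        simpa using (hasDerivAt_id t).div_const (4*c)
      exact ((h3.sub hid).sub ((h4.mul hη).div_const (2 * c ^ 2))).add
        ((h4.const_mul b).div_const (c ^ 2))
    have hg' := hg t
    rw [hξ₃ t, hξ₂ t] at hg' hD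
    convert hD using 1
    have : (-2 * x₁ t * (b - x₁ t * c) - 1/(4*c)
        - (2 * c * (b - x₁ t * c) * (b - x₁ t * c) + ξ₁ t * (0 - 2 * ξ₁ t * c))
          / (2 * c ^ 2)
        + b * (2 * c * (b - x₁ t * c)) / c ^ 2)
        = (ξ₁ t ^ 2 + (b - x₁ t * c) ^ 2 - 1/4) / c := by
      field_simp
      ring
    rw [this, hg']
    ring
  have hFc : ∀ t, F t = F 0 := fun t =>
    is_const_of_deriv_eq_zero (fun s => (hFd s).differentiableAt)
      (fun s => (hFd s).deriv) t 0
  intro t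
  have key := hFc t
  simp only [hF] at key
  set u := ξ₁ t * (b - x₁ t * c) with hu
  set v := ξ₁ 0 * (b - x₁ 0 * c) with hv
  set s := ξ₁ t with hs
  set r := ξ₁ 0 with hr
  have hgt := hg t; rw [hξ₃ t, hξ₂ t] at hgt
  have hg0 := hg 0; rw [hξ₃ 0, hξ₂ 0] at hg0
  obtain ⟨hus, hss⟩ := heis_prod_bd hgt
  obtain ⟨hvs, hrs⟩ := heis_prod_bd hg0
  have key3 : x₃ t - x₃ 0 - t / (4 * c) = ((u - v)/2 - b*(s - r)) / c ^ 2 := by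
    linear_combination key
  have hM : |(u - v)/2 - b*(s - r)| ≤ 1/8 + |b| := heis_M_bd hus hvs hss hrs
  calc |x₃ t - x₃ 0 - t / (4 * c)| = |(u - v)/2 - b*(s - r)| / c ^ 2 := by
        rw [key3, abs_div, abs_pow, sq_abs]
      _ ≤ (1/8 + |b|) / c ^ 2 := by gcongr
      _ = 1 / (8 * c ^ 2) + |b| / c ^ 2 := by ring
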